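/- There is no correct compositional translation τ from SYNCSIMPLE to LOCKSIMPLE with two locks (any initial store) of blocking type (P_1P_1, P_1P_1), i.e., where both τ(!) and τ(?) have blocking type P_1P_1 on the same lock. -/

import Mathlib

/-- Symbols of SYNCSIMPLE: `!` (bang) and `?` (ques). -/
inductive SSym | bang | ques
deriving DecidableEq

/-- A SYNCSIMPLE subprocess: a string over {!,?} ending with `0` (false) or `✓` (true). -/
abbrev SSub := List SSym × Bool

/-- A SYNCSIMPLE process: a multiset of subprocesses. -/
abbrev SProc := Multiset SSub

/-- The SYS reduction: a leading `!` and a leading `?` of two subprocesses are consumed. -/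
def SysStep (P Q : SProc) : Prop :=
  ∃ (u1 u2 : List SSym) (b1 b2 : Bool) (R : SProc),
    P = (SSym.bang :: u1, b1) ::ₘ (SSym.ques :: u2, b2) ::ₘ R ∧
    Q = (u1, b1) ::ₘ (u2, b2) ::ₘ R

/-- A process is successful if it contains the subprocess `✓`. -/
def SSuccessful (P : SProc) : Prop := (([], true) : SSub) ∈ P

def SMayConv (P : SProc) : Prop :=
  ∃ Q, Relation.ReflTransGen SysStep P Q ∧ SSuccessful Q

def SMustConv (P : SProc) : Prop :=
  ∀ Q, Relation.ReflTransGen SysStep P Q → SMayConv Q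

/-- Lock operations: put `P_i` and take `T_i`. -/
inductive LOp | put | take
deriving DecidableEq

abbrev LSym (k : ℕ) := LOp × Fin k
abbrev LSub (k : ℕ) := List (LSym k) × Bool
abbrev LProc (k : ℕ) := Multiset (LSub k)
/-- The store of `k` locks: `true` = full (■), `false` = empty (□). -/
abbrev Store (k : ℕ) := Fin k → Bool

/-- LOCKSIMPLE step: `P_i` fills an empty lock `i` (blocks if full);
    `T_i` empties lock `i` and never blocks. -/
def LockStep {k : ℕ} : (LProc k × Store k) → (LProc k × Store k) → Prop :=
  fun s t => ∃ (i : Fin k) (u : List (LSym k)) (b : Bool) (R : LProc k),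
    ((s.1 = ((LOp.put, i) :: u, b) ::ₘ R ∧ s.2 i = false ∧
      t.1 = (u, b) ::ₘ R ∧ t.2 = Function.update s.2 i true) ∨
     (s.1 = ((LOp.take, i) :: u, b) ::ₘ R ∧
      t.1 = (u, b) ::ₘ R ∧ t.2 = Function.update s.2 i false))

def LSuccessful {k : ℕ} (s : LProc k × Store k) : Prop := (([], true) : LSub k) ∈ s.1

def LMayConv {k : ℕ} (s : LProc k × Store k) : Prop :=
  ∃ t, Relation.ReflTransGen LockStep s t ∧ LSuccessful t

def LMustConv {k : ℕ} (s : LProc k × Store k) : Prop :=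
  ∀ t, Relation.ReflTransGen LockStep s t → LMayConv t

/-- The compositional translation determined by the strings `tb = τ(!)` and `tq = τ(?)`,
    applied to a subprocess. -/
def transSub {k : ℕ} (tb tq : List (LSym k)) (u : SSub) : LSub k :=
  (u.1.flatMap (fun c => match c with | SSym.bang => tb | SSym.ques => tq), u.2)

/-- The compositional translation applied to a process. -/
def transProc {k : ℕ} (tb tq : List (LSym k)) (P : SProc) : LProc k :=
  P.map (transSub tb tq)

/-- Correctness of the compositional translation `(tb, tq)` with initial store `IS`:
    may- and must-convergence are preserved and reflected. -/
def Correct {k : ℕ} (IS : Store k) (tb tq : List (LSym k)) : Prop :=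
  ∀ P : SProc,
    (SMayConv P ↔ LMayConv (transProc tb tq P, IS)) ∧
    (SMustConv P ↔ LMustConv (transProc tb tq P, IS))

/-- The solo execution of the string `s` from store `IS` reaches the point where
    `(put, i) :: rest` remains and deadlocks there since lock `i` is full. -/
def SoloBlocked {k : ℕ} (IS : Store k) (s : List (LSym k)) (i : Fin k)
    (rest : List (LSym k)) : Prop :=
  ∃ C : Store k,
    Relation.ReflTransGen LockStep (({(s, false)} : LProc k), IS)
      (({((LOp.put, i) :: rest, false)} : LProc k), C) ∧
    C i = true

/-- Blocking type `P_i`: the blocking prefix is `R P_i` with `R` free of `P_i, T_i`. -/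
def BlockingTypeP {k : ℕ} (IS : Store k) (s : List (LSym k)) (i : Fin k) : Prop :=
  ∃ r rest, s = r ++ (LOp.put, i) :: rest ∧ (∀ x ∈ r, x.2 ≠ i) ∧
    SoloBlocked IS s i rest

/-- Blocking type `P_i P_i`: the blocking prefix is `R₁ P_i R₂ P_i` with
    `R₂` free of `P_i, T_i`, deadlocking exactly before the last `P_i`. -/
def BlockingTypePP {k : ℕ} (IS : Store k) (s : List (LSym k)) (i : Fin k) : Prop :=
  ∃ r1 r2 rest, s = r1 ++ (LOp.put, i) :: r2 ++ (LOp.put, i) :: rest ∧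
    (∀ x ∈ r2, x.2 ≠ i) ∧ SoloBlocked IS s i rest

namespace NoPPAux

open Relation

/-- Single-component ("solo") step on a list of lock operations plus store. -/
def HStep (s t : List (LSym 2) × Store 2) : Prop :=
  ∃ (l : Fin 2) (u : List (LSym 2)),
    (s.1 = (LOp.put, l) :: u ∧ s.2 l = false ∧ t.1 = u ∧
      t.2 = Function.update s.2 l true) ∨
    (s.1 = (LOp.take, l) :: u ∧ t.1 = u ∧ t.2 = Function.update s.2 l false)

abbrev HRun := Relation.ReflTransGen HStep

lemma hstep_lift {s t : List (LSym 2) × Store 2} (h : HStep s t) (b : Bool) (R : LProc 2) :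
    LockStep ((s.1, b) ::ₘ R, s.2) ((t.1, b) ::ₘ R, t.2) := by
  obtain ⟨l, u, h | h⟩ := h
  · exact ⟨l, u, b, R, Or.inl ⟨by rw [h.1], h.2.1, by rw [h.2.2.1], h.2.2.2⟩⟩
  · exact ⟨l, u, b, R, Or.inr ⟨by rw [h.1], by rw [h.2.1], h.2.2⟩⟩

lemma hrun_lift {s t : List (LSym 2) × Store 2} (h : HRun s t) (b : Bool) (R : LProc 2) :
    Relation.ReflTransGen LockStep ((s.1, b) ::ₘ R, s.2) ((t.1, b) ::ₘ R, t.2) := by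
  induction h with
  | refl => exact .refl
  | tail _ h2 ih => exact ih.tail (hstep_lift h2 b R)

lemma hstep_put_inv {l : Fin 2} {u : List (LSym 2)} {σ : Store 2} {t}
    (h : HStep ((LOp.put, l) :: u, σ) t) :
    σ l = false ∧ t.1 = u ∧ t.2 = Function.update σ l true := by
  obtain ⟨l', u', h | h⟩ := h
  · obtain ⟨h1, h2, h3, h4⟩ := h
    simp only at h1
    injection h1 with hh ht
    injection hh with hop hl
    subst hl; subst ht
    exact ⟨h2, h3, h4⟩
  · obtain ⟨h1, h3, h4⟩ := h
    simp only at h1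
    injection h1 with hh ht
    injection hh with hop hl
    simp at hop

lemma hstep_take_inv {l : Fin 2} {u : List (LSym 2)} {σ : Store 2} {t}
    (h : HStep ((LOp.take, l) :: u, σ) t) :
    t.1 = u ∧ t.2 = Function.update σ l false := by
  obtain ⟨l', u', h | h⟩ := h
  · obtain ⟨h1, h2, h3, h4⟩ := h
    simp only at h1
    injection h1 with hh ht
    injection hh with hop hl
    simp at hop
  · obtain ⟨h1, h3, h4⟩ := h
    simp only at h1
    injection h1 with hh ht
    injection hh with hop hl
    subst hl; subst ht
    exact ⟨h3, h4⟩

lemma hstep_len {s t : List (LSym 2) × Store 2} (h : HStep s t) :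
    t.1.length + 1 = s.1.length := by
  obtain ⟨l, u, h | h⟩ := h
  · rw [h.1, h.2.2.1]; rfl
  · rw [h.1, h.2.1]; rfl

lemma hrun_len {s t : List (LSym 2) × Store 2} (h : HRun s t) :
    t.1.length ≤ s.1.length := by
  induction h with
  | refl => exact le_refl _
  | tail _ h2 ih => have := hstep_len h2; omega

lemma hrun_self {u : List (LSym 2)} {σ τ : Store 2} (h : HRun (u, σ) (u, τ)) : σ = τ := by
  rcases Relation.ReflTransGen.cases_head h with heq | ⟨m, h1, h2⟩
  · exact congrArg Prod.snd heq
  · exfalso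
    have e1 := hstep_len h1
    have e2 := hrun_len h2
    simp only at e1 e2
    omega

lemma hstep_suffix {s t : List (LSym 2) × Store 2} (h : HStep s t) : t.1 <:+ s.1 := by
  obtain ⟨l, u, h | h⟩ := h
  · rw [h.1, h.2.2.1]; exact List.suffix_cons _ _
  · rw [h.1, h.2.1]; exact List.suffix_cons _ _

lemma hrun_suffix {s t : List (LSym 2) × Store 2} (h : HRun s t) : t.1 <:+ s.1 := by
  induction h with
  | refl => exact List.suffix_rfl
  | tail _ h2 ih => exact (hstep_suffix h2).trans ih

lemma hrun_mid {s t : List (LSym 2) × Store 2} (h : HRun s t) :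
    ∀ w, t.1 <:+ w → w <:+ s.1 → ∃ τ, HRun s (w, τ) ∧ HRun (w, τ) t := by
  induction h using Relation.ReflTransGen.head_induction_on with
  | refl =>
    intro w h1 h2
    have hw : w = t.1 := h2.eq_of_length (le_antisymm (h2.length_le) (h1.length_le))
    subst hw
    exact ⟨t.2, by rw [Prod.mk.eta], by rw [Prod.mk.eta]⟩
  | head h' hc ih =>
    rename_i s' c
    intro w h1 h2
    by_cases hw : w = s'.1
    · subst hw
      exact ⟨s'.2, by rw [Prod.mk.eta], Relation.ReflTransGen.head (by rw [Prod.mk.eta]; exact h') hc⟩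
    · obtain ⟨l, u, hh⟩ := h'
      have hcons : s'.1 = (if True then ((LOp.put, l) : LSym 2) else (LOp.take, l)) :: u ∨ True := Or.inr trivial
      -- get s'.1 = e :: c.1 for some e
      have hdecomp : ∃ e, s'.1 = e :: c.1 := by
        rcases hh with ⟨ha, _, hb, _⟩ | ⟨ha, hb, _⟩
        · exact ⟨_, by rw [ha, hb]⟩
        · exact ⟨_, by rw [ha, hb]⟩
      obtain ⟨e, he⟩ := hdecomp
      rw [he, List.suffix_cons_iff] at h2
      rcases h2 with h2 | h2
      · exact absurd (h2.trans he.symm) hw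
      · obtain ⟨τ, r1, r2⟩ := ih w h1 h2
        exact ⟨τ, Relation.ReflTransGen.head (⟨l, u, hh⟩) r1, r2⟩

end NoPPAux
namespace NoPPAux

lemma hrun_consume (l₀ : Fin 2) (v : Bool) (a : List (LSym 2)) :
    ∀ {w : List (LSym 2)} {σ τ : Store 2}, HRun (a ++ w, σ) (w, τ) →
      (∀ z ∈ a, z.2 ≠ l₀) →
      HRun (a ++ w, Function.update σ l₀ v) (w, Function.update τ l₀ v) := by
  induction a with
  | nil =>
    intro w σ τ h _
    simp only [List.nil_append] at h ⊢
    rw [hrun_self h]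
  | cons c a ih =>
    intro w σ τ h hfree
    rw [List.cons_append] at h ⊢
    rcases Relation.ReflTransGen.cases_head h with heq | ⟨m, h1, h2⟩
    · exfalso
      have := congrArg (fun p => p.1.length) heq
      simp at this
      omega
    · obtain ⟨op, l⟩ := c
      have hl : l ≠ l₀ := hfree (op, l) (List.mem_cons_self)
      obtain ⟨m1, m2⟩ := m
      cases op with
      | put =>
        obtain ⟨hσ, h3, h4⟩ := hstep_put_inv h1
        simp only at h3 h4
        subst h3; subst h4
        have step' : HStep ((LOp.put, l) :: (a ++ w), Function.update σ l₀ v)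
            (a ++ w, Function.update (Function.update σ l₀ v) l true) :=
          ⟨l, a ++ w, Or.inl ⟨rfl, by show Function.update σ l₀ v l = false; rw [Function.update_of_ne hl]; exact hσ, rfl, rfl⟩⟩
        have hcomm : Function.update (Function.update σ l₀ v) l true
            = Function.update (Function.update σ l true) l₀ v :=
          Function.update_comm hl.symm _ _ _
        refine Relation.ReflTransGen.head step' ?_
        rw [hcomm]
        exact ih h2 (fun z hz => hfree z (List.mem_cons_of_mem _ hz))
      | take =>
        obtain ⟨h3, h4⟩ := hstep_take_inv h1
        simp only at h3 h4
        subst h3; subst h4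
        have step' : HStep ((LOp.take, l) :: (a ++ w), Function.update σ l₀ v)
            (a ++ w, Function.update (Function.update σ l₀ v) l false) :=
          ⟨l, a ++ w, Or.inr ⟨rfl, rfl, rfl⟩⟩
        have hcomm : Function.update (Function.update σ l₀ v) l false
            = Function.update (Function.update σ l false) l₀ v :=
          Function.update_comm hl.symm _ _ _
        refine Relation.ReflTransGen.head step' ?_
        rw [hcomm]
        exact ih h2 (fun z hz => hfree z (List.mem_cons_of_mem _ hz))

lemma suffix_thru (i : Fin 2) :
    ∀ (a : List (LSym 2)) {w s : List (LSym 2)}, s <:+ a ++ w → (∀ z ∈ a, z.2 ≠ i) →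
      ∀ {c : LSym 2} {s' : List (LSym 2)}, s = c :: s' → c.2 = i → s <:+ w := by
  intro a
  induction a with
  | nil =>
    intro w s h _ c s' hs _
    simpa using h
  | cons d a ih =>
    intro w s h hfree c s' hs hc
    rw [List.cons_append, List.suffix_cons_iff] at h
    rcases h with h | h
    · exfalso
      rw [hs] at h
      injection h with h1 _
      exact hfree d (List.mem_cons_self) (h1 ▸ hc)
    · exact ih h (fun z hz => hfree z (List.mem_cons_of_mem _ hz)) hs hc

/-- The string `u` run солo from `σ` blocks at a `put i` with lock `i` full. -/
def DBlock (i : Fin 2) (u : List (LSym 2)) (σ : Store 2) : Prop :=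
  ∃ rest δ, HRun (u, σ) ((LOp.put, i) :: rest, δ) ∧ δ i = true

lemma dblock_update (i : Fin 2) {y a b : List (LSym 2)} {σ : Store 2} (v : Bool)
    (hy : y = a ++ (LOp.take, i) :: b) (ha : ∀ z ∈ a, z.2 ≠ i)
    (h : DBlock i y σ) : DBlock i y (Function.update σ i v) := by
  obtain ⟨rest, δ, run, hδ⟩ := h
  have h0 : ((LOp.put, i) :: rest) <:+ y := hrun_suffix run
  have hsuf : ((LOp.put, i) :: rest) <:+ ((LOp.take, i) :: b) :=
    suffix_thru i a (by rw [← hy]; exact h0) ha rfl rfl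
  obtain ⟨τ, seg1, seg2⟩ := hrun_mid run ((LOp.take, i) :: b) hsuf ⟨a, hy.symm⟩
  rcases Relation.ReflTransGen.cases_head seg2 with heq | ⟨m, s1, s2⟩
  · exfalso
    have := congrArg Prod.fst heq
    simp only at this
    injection this with h1 _
    injection h1 with h2 _
    simp at h2
  · obtain ⟨m1, m2⟩ := m
    obtain ⟨h3, h4⟩ := hstep_take_inv s1
    simp only at h3 h4
    rw [h3, h4] at s2
    have seg1' := hrun_consume i v a (by rw [← hy]; exact seg1) ha
    have step' : HStep ((LOp.take, i) :: b, Function.update τ i v)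
        (b, Function.update τ i false) :=
      ⟨i, b, Or.inr ⟨rfl, rfl, by simp [Function.update_idem]⟩⟩
    refine ⟨rest, δ, ?_, hδ⟩
    rw [hy]
    exact seg1'.trans (Relation.ReflTransGen.head step' s2)

lemma dead_puts {M : LProc 2} {σ : Store 2}
    (h : ∀ p ∈ M, ∃ l u, p.1 = ((LOp.put, l) : LSym 2) :: u ∧ σ l = true) :
    ∀ t, ¬ LockStep (M, σ) t := by
  rintro t ⟨l, u, b, R, ⟨h1, h2, -, -⟩ | ⟨h1, -, -⟩⟩
  · simp only at h1 h2
    have hm : (((LOp.put, l) :: u, b) : LSub 2) ∈ M := by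
      rw [h1]; exact Multiset.mem_cons_self _ _
    obtain ⟨l', u', he, hσ⟩ := h _ hm
    simp only at he
    injection he with hh _
    injection hh with _ hl
    rw [← hl] at hσ
    rw [hσ] at h2
    exact Bool.noConfusion h2
  · simp only at h1
    have hm : (((LOp.take, l) :: u, b) : LSub 2) ∈ M := by
      rw [h1]; exact Multiset.mem_cons_self _ _
    obtain ⟨l', u', he, hσ⟩ := h _ hm
    simp only at he
    injection he with hh _
    injection hh with hop _
    exact LOp.noConfusion hop

end NoPPAux
namespace NoPPAux

/-- The first `i`-operation of the list (if any) is a `put`. -/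
def FirstIPut (i : Fin 2) (l : List (LSym 2)) : Prop :=
  ∀ a c b, l = a ++ c :: b → (∀ z ∈ a, z.2 ≠ i) → c.2 = i → c.1 = LOp.put

lemma firstIPut_head {i : Fin 2} {c : LSym 2} {u} (hc : c.2 = i)
    (h : FirstIPut i (c :: u)) : c.1 = LOp.put :=
  h [] c u rfl (by simp) hc

lemma firstIPut_tail {i : Fin 2} {c : LSym 2} {u} (hc : c.2 ≠ i)
    (h : FirstIPut i (c :: u)) : FirstIPut i u := by
  intro a c' b hab ha hc'
  refine h (c :: a) c' b (by rw [hab, List.cons_append]) ?_ hc'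
  intro z hz
  rcases List.mem_cons.mp hz with rfl | hz
  · exact hc
  · exact ha z hz

lemma firstIPut_put_head (i : Fin 2) (u : List (LSym 2)) :
    FirstIPut i (((LOp.put, i) : LSym 2) :: u) := by
  intro a c b hab ha hc
  cases a with
  | nil =>
    injection hab with h1 _
    rw [← h1]
  | cons d a =>
    rw [List.cons_append] at hab
    injection hab with h1 _
    exact absurd (by rw [← h1]) (ha d (List.mem_cons_self))

lemma first_uniq (i : Fin 2) :
    ∀ (a : List (LSym 2)) {a' : List (LSym 2)} {c c' : LSym 2} {b b' : List (LSym 2)},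
      a ++ c :: b = a' ++ c' :: b' → (∀ z ∈ a, z.2 ≠ i) → (∀ z ∈ a', z.2 ≠ i) →
      c.2 = i → c'.2 = i → c = c' := by
  intro a
  induction a with
  | nil =>
    intro a' c c' b b' h _ ha' hc hc'
    cases a' with
    | nil =>
      simp only [List.nil_append] at h
      injection h with h1 _
    | cons d a' =>
      rw [List.nil_append, List.cons_append] at h
      injection h with h1 _
      exact absurd (h1 ▸ hc) (ha' d (List.mem_cons_self))
  | cons d a ih =>
    intro a' c c' b b' h ha ha' hc hc'
    cases a' with
    | nil =>
      rw [List.cons_append, List.nil_append] at h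
      injection h with h1 _
      exact absurd (h1.symm ▸ hc') (ha d (List.mem_cons_self))
    | cons e a' =>
      rw [List.cons_append, List.cons_append] at h
      injection h with _ h2
      exact ih h2 (fun z hz => ha z (List.mem_cons_of_mem _ hz))
        (fun z hz => ha' z (List.mem_cons_of_mem _ hz)) hc hc'

lemma exists_first (i : Fin 2) :
    ∀ (x : List (LSym 2)), (∃ c ∈ x, (c : LSym 2).2 = i) →
      ∃ a c b, x = a ++ c :: b ∧ (∀ z ∈ a, z.2 ≠ i) ∧ (c : LSym 2).2 = i := by
  intro x
  induction x with
  | nil => rintro ⟨c, hc, -⟩; simp at hc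
  | cons d x ih =>
    intro h
    by_cases hd : d.2 = i
    · exact ⟨[], d, x, rfl, by simp, hd⟩
    · obtain ⟨c, hc, hci⟩ := h
      rcases List.mem_cons.mp hc with rfl | hc
      · exact absurd hci hd
      · obtain ⟨a, c', b, h1, h2, h3⟩ := ih ⟨c, hc, hci⟩
        refine ⟨d :: a, c', b, by rw [h1, List.cons_append], ?_, h3⟩
        intro z hz
        rcases List.mem_cons.mp hz with rfl | hz
        · exact hd
        · exact h2 z hz

lemma fin2_eq_of_ne : ∀ {i a b : Fin 2}, a ≠ i → b ≠ i → a = b := by decide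

lemma fin2_cases : ∀ {i j : Fin 2}, j ≠ i → ∀ l : Fin 2, l = i ∨ l = j := by decide

def msize (M : LProc 2) : ℕ := (M.map fun p => p.1.length).sum

lemma j_reach (i : Fin 2) : ∀ (n : ℕ) (M : LProc 2) (σ : Store 2), msize M ≤ n →
    σ i = true →
    (∀ p ∈ M, FirstIPut i (p : LSub 2).1) →
    (∀ p ∈ M, (p : LSub 2).2 = true → ∃ c ∈ (p : LSub 2).1, (c : LSym 2).2 = i) →
    ∃ t, Relation.ReflTransGen LockStep (M, σ) t ∧ (∀ t', ¬ LockStep t t') ∧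
      ¬ LSuccessful t := by
  intro n
  induction n using Nat.strong_induction_on with
  | _ n ih =>
  intro M σ hms hσ hΦ hΨ
  by_cases hdead : ∀ t', ¬ LockStep (M, σ) t'
  · refine ⟨(M, σ), .refl, hdead, ?_⟩
    intro hs
    obtain ⟨c, hc, -⟩ := hΨ _ hs rfl
    simp at hc
  · push_neg at hdead
    obtain ⟨t', ht'⟩ := hdead
    obtain ⟨l, u, b, R, hcase⟩ := ht'
    rcases hcase with ⟨h1, h2, -, -⟩ | ⟨h1, -, -⟩
    all_goals simp only at h1
    -- put case
    · have hmem : (((LOp.put, l) :: u, b) : LSub 2) ∈ M := by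
        rw [h1]; exact Multiset.mem_cons_self _ _
      simp only at h2
      have hl : l ≠ i := by
        rintro rfl
        rw [hσ] at h2
        exact Bool.noConfusion h2
      have hms' : msize ((u, b) ::ₘ R) < n := by
        have : msize M = u.length + 1 + msize R := by
          rw [h1]; simp [msize, Multiset.sum_cons]
        have h5 : msize ((u, b) ::ₘ R) = u.length + msize R := by
          simp [msize, Multiset.sum_cons]
        omega
      have hstep : LockStep (M, σ) ((u, b) ::ₘ R, Function.update σ l true) :=
        ⟨l, u, b, R, Or.inl ⟨h1, h2, rfl, rfl⟩⟩
      obtain ⟨t, rtg, hd, hs⟩ := ih _ hms' ((u, b) ::ₘ R) (Function.update σ l true)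
        (le_refl _)
        (by rw [Function.update_of_ne (Ne.symm hl)]; exact hσ)
        (by
          intro p hp
          rcases Multiset.mem_cons.mp hp with rfl | hp
          · exact firstIPut_tail hl (hΦ _ hmem)
          · exact hΦ p (by rw [h1]; exact Multiset.mem_cons_of_mem hp))
        (by
          intro p hp hpt
          rcases Multiset.mem_cons.mp hp with rfl | hp
          · obtain ⟨c, hc, hci⟩ := hΨ _ hmem hpt
            rcases List.mem_cons.mp hc with rfl | hc
            · exact absurd hci hl
            · exact ⟨c, hc, hci⟩
          · exact hΨ p (by rw [h1]; exact Multiset.mem_cons_of_mem hp) hpt)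
      exact ⟨t, Relation.ReflTransGen.head hstep rtg, hd, hs⟩
    -- take case
    · have hmem : (((LOp.take, l) :: u, b) : LSub 2) ∈ M := by
        rw [h1]; exact Multiset.mem_cons_self _ _
      have hl : l ≠ i := by
        rintro rfl
        have := firstIPut_head (c := ((LOp.take, l) : LSym 2)) rfl (hΦ _ hmem)
        exact LOp.noConfusion this
      have hms' : msize ((u, b) ::ₘ R) < n := by
        have : msize M = u.length + 1 + msize R := by
          rw [h1]; simp [msize, Multiset.sum_cons]
        have h5 : msize ((u, b) ::ₘ R) = u.length + msize R := by
          simp [msize, Multiset.sum_cons]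
        omega
      have hstep : LockStep (M, σ) ((u, b) ::ₘ R, Function.update σ l false) :=
        ⟨l, u, b, R, Or.inr ⟨h1, rfl, rfl⟩⟩
      obtain ⟨t, rtg, hd, hs⟩ := ih _ hms' ((u, b) ::ₘ R) (Function.update σ l false)
        (le_refl _)
        (by rw [Function.update_of_ne (Ne.symm hl)]; exact hσ)
        (by
          intro p hp
          rcases Multiset.mem_cons.mp hp with rfl | hp
          · exact firstIPut_tail hl (hΦ _ hmem)
          · exact hΦ p (by rw [h1]; exact Multiset.mem_cons_of_mem hp))
        (by
          intro p hp hpt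
          rcases Multiset.mem_cons.mp hp with rfl | hp
          · obtain ⟨c, hc, hci⟩ := hΨ _ hmem hpt
            rcases List.mem_cons.mp hc with rfl | hc
            · exact absurd hci hl
            · exact ⟨c, hc, hci⟩
          · exact hΨ p (by rw [h1]; exact Multiset.mem_cons_of_mem hp) hpt)
      exact ⟨t, Relation.ReflTransGen.head hstep rtg, hd, hs⟩

end NoPPAux
namespace NoPPAux

lemma main_reach (i : Fin 2) : ∀ (n : ℕ) (x y : List (LSym 2)) (σ : Store 2),
    x.length + y.length ≤ n → DBlock i x σ → DBlock i y σ →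
    ∃ t, Relation.ReflTransGen LockStep
        (((x, false) ::ₘ (y, true) ::ₘ 0 : LProc 2), σ) t ∧
      (∀ t', ¬ LockStep t t') ∧ ¬ LSuccessful t := by
  intro n
  induction n using Nat.strong_induction_on with
  | _ n ih =>
  intro x y σ hlen hx hy
  obtain ⟨rx, δx, runx, hδx⟩ := hx
  obtain ⟨ry, δy, runy, hδy⟩ := hy
  have hxmem : ((LOp.put, i) : LSym 2) ∈ x :=
    (hrun_suffix runx).subset (List.mem_cons_self)
  have hymem : ((LOp.put, i) : LSym 2) ∈ y :=
    (hrun_suffix runy).subset (List.mem_cons_self)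
  obtain ⟨ax, cx, bx, hxeq, hax, hcx⟩ := exists_first i x ⟨_, hxmem, rfl⟩
  obtain ⟨ay, cy, byy, hyeq, hay, hcy⟩ := exists_first i y ⟨_, hymem, rfl⟩
  obtain ⟨opx, lx⟩ := cx
  obtain ⟨opy, ly⟩ := cy
  simp only at hcx hcy
  rw [hcx] at hxeq
  rw [hcy] at hyeq
  cases opx with
  | put =>
    -- Case A : the first i-op of x is a put; run y to its block point
    have frun := hrun_lift runy true ((x, false) ::ₘ 0)
    obtain ⟨t, rtg, hd, hs⟩ := j_reach i _
      (((((LOp.put, i) : LSym 2) :: ry, true) : LSub 2) ::ₘ (x, false) ::ₘ 0) δy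
      (le_refl _) hδy
      (by
        intro p hp
        rcases Multiset.mem_cons.mp hp with rfl | hp
        · exact firstIPut_put_head i ry
        · rcases Multiset.mem_cons.mp hp with rfl | hp
          · intro a c b hab ha hc
            have hcc : c = ((LOp.put, i) : LSym 2) :=
              first_uniq i a (hab.symm.trans hxeq) ha hax hc rfl
            rw [hcc]
          · simp at hp)
      (by
        intro p hp hpt
        rcases Multiset.mem_cons.mp hp with rfl | hp
        · exact ⟨(LOp.put, i), List.mem_cons_self, rfl⟩
        · rcases Multiset.mem_cons.mp hp with rfl | hp
          · simp at hpt
          · simp at hp)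
    refine ⟨t, ?_, hd, hs⟩
    have hsw : ((x, false) ::ₘ (y, true) ::ₘ 0 : LProc 2) = (y, true) ::ₘ (x, false) ::ₘ 0 :=
      Multiset.cons_swap _ _ _
    rw [hsw]
    exact frun.trans rtg
  | take =>
    cases opy with
    | put =>
      -- Case B : first i-op of x is take, of y is put; run x to its block point
      have frun := hrun_lift runx false ((y, true) ::ₘ 0)
      obtain ⟨t, rtg, hd, hs⟩ := j_reach i _
        (((((LOp.put, i) : LSym 2) :: rx, false) : LSub 2) ::ₘ (y, true) ::ₘ 0) δx
        (le_refl _) hδx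
        (by
          intro p hp
          rcases Multiset.mem_cons.mp hp with rfl | hp
          · exact firstIPut_put_head i rx
          · rcases Multiset.mem_cons.mp hp with rfl | hp
            · intro a c b hab ha hc
              have hcc : c = ((LOp.put, i) : LSym 2) :=
                first_uniq i a (hab.symm.trans hyeq) ha hay hc rfl
              rw [hcc]
            · simp at hp)
        (by
          intro p hp hpt
          rcases Multiset.mem_cons.mp hp with rfl | hp
          · simp at hpt
          · rcases Multiset.mem_cons.mp hp with rfl | hp
            · exact ⟨(LOp.put, i), by rw [hyeq]; exact List.mem_append_right _ (List.mem_cons_self), rfl⟩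
            · simp at hp)
      exact ⟨t, frun.trans rtg, hd, hs⟩
    | take =>
      -- Case C : both first i-ops are takes
      cases ax with
      | nil =>
        -- x itself starts with (take,i) : execute it
        simp only [List.nil_append] at hxeq
        subst hxeq
        have hDx' : DBlock i bx (Function.update σ i false) := by
          rcases Relation.ReflTransGen.cases_head runx with heq | ⟨m, s1, s2⟩
          · exfalso
            have hfst := congrArg Prod.fst heq
            simp only at hfst
            injection hfst with h1 _
            injection h1 with h2 _
            exact LOp.noConfusion h2
          · obtain ⟨m1, m2⟩ := m
            obtain ⟨h3, h4⟩ := hstep_take_inv s1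
            simp only at h3 h4
            rw [h3, h4] at s2
            exact ⟨rx, δx, s2, hδx⟩
        have hDy' : DBlock i y (Function.update σ i false) :=
          dblock_update i false hyeq hay ⟨ry, δy, runy, hδy⟩
        have hlt : bx.length + y.length < n := by
          simp only [List.length_cons] at hlen; omega
        obtain ⟨t, rtg, hd, hs⟩ := ih _ hlt bx y (Function.update σ i false) le_rfl hDx' hDy'
        have hstep : HStep ((((LOp.take, i) : LSym 2) :: bx : List (LSym 2)), σ)
            (bx, Function.update σ i false) := ⟨i, bx, Or.inr ⟨rfl, rfl, rfl⟩⟩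
        exact ⟨t, Relation.ReflTransGen.head (hstep_lift hstep false ((y, true) ::ₘ 0)) rtg, hd, hs⟩
      | cons dx ax' =>
        cases ay with
        | nil =>
          -- y itself starts with (take,i) : execute it
          simp only [List.nil_append] at hyeq
          subst hyeq
          have hDy' : DBlock i byy (Function.update σ i false) := by
            rcases Relation.ReflTransGen.cases_head runy with heq | ⟨m, s1, s2⟩
            · exfalso
              have hfst := congrArg Prod.fst heq
              simp only at hfst
              injection hfst with h1 _
              injection h1 with h2 _
              exact LOp.noConfusion h2
            · obtain ⟨m1, m2⟩ := m
              obtain ⟨h3, h4⟩ := hstep_take_inv s1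
              simp only at h3 h4
              rw [h3, h4] at s2
              exact ⟨ry, δy, s2, hδy⟩
          have hDx' : DBlock i x (Function.update σ i false) :=
            dblock_update i false hxeq hax ⟨rx, δx, runx, hδx⟩
          have hlt : x.length + byy.length < n := by
            simp only [List.length_cons] at hlen; omega
          obtain ⟨t, rtg, hd, hs⟩ := ih _ hlt x byy (Function.update σ i false) le_rfl hDx' hDy'
          have hstep : HStep ((((LOp.take, i) : LSym 2) :: byy : List (LSym 2)), σ)
              (byy, Function.update σ i false) := ⟨i, byy, Or.inr ⟨rfl, rfl, rfl⟩⟩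
          have step' := hstep_lift hstep true ((x, false) ::ₘ 0)
          have hsw1 : ((x, false) ::ₘ ((((LOp.take, i) : LSym 2) :: byy), true) ::ₘ 0 : LProc 2)
              = (((((LOp.take, i) : LSym 2) :: byy), true)) ::ₘ (x, false) ::ₘ 0 :=
            Multiset.cons_swap _ _ _
          have hsw2 : (((byy, true) : LSub 2) ::ₘ (x, false) ::ₘ 0 : LProc 2)
              = ((x, false) : LSub 2) ::ₘ (byy, true) ::ₘ 0 := Multiset.cons_swap _ _ _
          rw [hsw2] at step'
          refine ⟨t, ?_, hd, hs⟩
          rw [hsw1]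
          exact Relation.ReflTransGen.head step' rtg
        | cons dy ay' =>
          -- both heads are non-i operations, hence on the same other lock
          have hdx : (dx : LSym 2).2 ≠ i := hax dx (List.mem_cons_self)
          have hdy : (dy : LSym 2).2 ≠ i := hay dy (List.mem_cons_self)
          obtain ⟨odx, jx⟩ := dx
          obtain ⟨ody, jy⟩ := dy
          simp only at hdx hdy
          have hjj : jx = jy := fin2_eq_of_ne hdx hdy
          subst hjj
          rw [List.cons_append] at hxeq hyeq
          have hax' : ∀ z ∈ ax', (z : LSym 2).2 ≠ i :=
            fun z hz => hax z (List.mem_cons_of_mem _ hz)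
          have hay' : ∀ z ∈ ay', (z : LSym 2).2 ≠ i :=
            fun z hz => hay z (List.mem_cons_of_mem _ hz)
          have hlx := congrArg List.length hxeq
          have hly := congrArg List.length hyeq
          simp only [List.length_cons] at hlx hly
          cases odx with
          | take =>
            -- C3a : x's head is (take, jx); execute it
            have hDx' : DBlock i (ax' ++ ((LOp.take, i) : LSym 2) :: bx)
                (Function.update σ jx false) := by
              rcases Relation.ReflTransGen.cases_head runx with heq | ⟨m, s1, s2⟩
              · exfalso
                have hfst := congrArg Prod.fst heq
                simp only at hfst
                rw [hxeq] at hfst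
                injection hfst with h1 _
                injection h1 with h2 _
                exact LOp.noConfusion h2
              · rw [hxeq] at s1
                obtain ⟨m1, m2⟩ := m
                obtain ⟨h3, h4⟩ := hstep_take_inv s1
                simp only at h3 h4
                rw [h3, h4] at s2
                exact ⟨rx, δx, s2, hδx⟩
            have hDy' : DBlock i y (Function.update σ jx false) := by
              cases ody with
              | take =>
                rcases Relation.ReflTransGen.cases_head runy with heq | ⟨m, s1, s2⟩
                · exfalso
                  have hfst := congrArg Prod.fst heq
                  simp only at hfst
                  rw [hyeq] at hfst
                  injection hfst with h1 _
                  injection h1 with h2 _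
                  exact LOp.noConfusion h2
                · rw [hyeq] at s1
                  obtain ⟨m1, m2⟩ := m
                  obtain ⟨h3, h4⟩ := hstep_take_inv s1
                  simp only at h3 h4
                  rw [h3, h4] at s2
                  refine ⟨ry, δy, Relation.ReflTransGen.head
                    ⟨jx, ay' ++ ((LOp.take, i) : LSym 2) :: byy,
                      Or.inr ⟨by rw [hyeq], rfl, by simp [Function.update_idem]⟩⟩ s2, hδy⟩
              | put =>
                rcases Relation.ReflTransGen.cases_head runy with heq | ⟨m, s1, s2⟩
                · exfalso
                  have hfst := congrArg Prod.fst heq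
                  simp only at hfst
                  rw [hyeq] at hfst
                  injection hfst with h1 _
                  injection h1 with _ h2
                  exact hdy h2
                · rw [hyeq] at s1
                  obtain ⟨hσj, -, -⟩ := hstep_put_inv s1
                  have hupd : Function.update σ jx false = σ := by
                    rw [← hσj]; exact Function.update_eq_self _ _
                  rw [hupd]
                  exact ⟨ry, δy, runy, hδy⟩
            have hlt : (ax' ++ ((LOp.take, i) : LSym 2) :: bx).length + y.length < n := by
              omega
            obtain ⟨t, rtg, hd, hs⟩ := ih _ hlt _ y (Function.update σ jx false) le_rfl hDx' hDy'
            have hstep : HStep (x, σ)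
                (ax' ++ ((LOp.take, i) : LSym 2) :: bx, Function.update σ jx false) :=
              ⟨jx, ax' ++ ((LOp.take, i) : LSym 2) :: bx, Or.inr ⟨by rw [hxeq], rfl, rfl⟩⟩
            exact ⟨t, Relation.ReflTransGen.head
              (hstep_lift hstep false ((y, true) ::ₘ 0)) rtg, hd, hs⟩
          | put =>
            -- x's head is (put, jx); its run fires it, so σ jx = false
            have hσj : σ jx = false := by
              rcases Relation.ReflTransGen.cases_head runx with heq | ⟨m, s1, s2⟩
              · exfalso
                have hfst := congrArg Prod.fst heq
                simp only at hfst
                rw [hxeq] at hfst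
                injection hfst with h1 _
                injection h1 with _ h2
                exact hdx h2
              · rw [hxeq] at s1
                exact (hstep_put_inv s1).1
            cases ody with
            | take =>
              -- C3b : execute y's head (take, jx); the store is unchanged
              have hupd : Function.update σ jx false = σ := by
                rw [← hσj]; exact Function.update_eq_self _ _
              have hDy' : DBlock i (ay' ++ ((LOp.take, i) : LSym 2) :: byy) σ := by
                rcases Relation.ReflTransGen.cases_head runy with heq | ⟨m, s1, s2⟩
                · exfalso
                  have hfst := congrArg Prod.fst heq
                  simp only at hfst
                  rw [hyeq] at hfst
                  injection hfst with h1 _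
                  injection h1 with h2 _
                  exact LOp.noConfusion h2
                · rw [hyeq] at s1
                  obtain ⟨m1, m2⟩ := m
                  obtain ⟨h3, h4⟩ := hstep_take_inv s1
                  simp only at h3 h4
                  rw [h3, h4, hupd] at s2
                  exact ⟨ry, δy, s2, hδy⟩
              have hlt : x.length + (ay' ++ ((LOp.take, i) : LSym 2) :: byy).length < n := by
                omega
              obtain ⟨t, rtg, hd, hs⟩ := ih _ hlt x _ σ le_rfl ⟨rx, δx, runx, hδx⟩ hDy'
              have hstep : HStep (y, σ)
                  (ay' ++ ((LOp.take, i) : LSym 2) :: byy, Function.update σ jx false) :=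
                ⟨jx, ay' ++ ((LOp.take, i) : LSym 2) :: byy, Or.inr ⟨by rw [hyeq], rfl, rfl⟩⟩
              have step' := hstep_lift hstep true ((x, false) ::ₘ 0)
              rw [hupd] at step'
              have hsw1 : ((x, false) ::ₘ (y, true) ::ₘ 0 : LProc 2)
                  = ((y, true) : LSub 2) ::ₘ (x, false) ::ₘ 0 := Multiset.cons_swap _ _ _
              have hsw2 : (((ay' ++ ((LOp.take, i) : LSym 2) :: byy, true) : LSub 2) ::ₘ (x, false) ::ₘ 0 : LProc 2)
                  = ((x, false) : LSub 2) ::ₘ (ay' ++ ((LOp.take, i) : LSym 2) :: byy, true) ::ₘ 0 :=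
                Multiset.cons_swap _ _ _
              rw [hsw2] at step'
              refine ⟨t, ?_, hd, hs⟩
              rw [hsw1]
              exact Relation.ReflTransGen.head step' rtg
            | put =>
              -- C3c : both heads are (put, jx) : direct deadlock construction
              have frun := hrun_lift runx false ((y, true) ::ₘ 0)
              by_cases hj : δx jx = true
              · -- already dead : x blocked on put i (full), y blocked on put jx (full)
                refine ⟨_, frun, dead_puts ?_, ?_⟩
                · intro p hp
                  rcases Multiset.mem_cons.mp hp with rfl | hp
                  · exact ⟨i, rx, rfl, hδx⟩
                  · rcases Multiset.mem_cons.mp hp with rfl | hp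
                    · exact ⟨jx, ay' ++ ((LOp.take, i) : LSym 2) :: byy, by rw [hyeq], hj⟩
                    · simp at hp
                · intro hsucc
                  simp only [LSuccessful] at hsucc
                  rcases Multiset.mem_cons.mp hsucc with he | hsucc
                  · injection he with h1 _
                    exact nomatch h1
                  · rcases Multiset.mem_cons.mp hsucc with he | hsucc
                    · injection he with h1 _
                      rw [hyeq] at h1
                      exact nomatch h1
                    · simp at hsucc
              · -- lock jx is free after x's run : let y fire its put and continue to its block
                have hjf : δx jx = false := by revert hj; cases δx jx <;> simp
                rcases Relation.ReflTransGen.cases_head runy with heq | ⟨m, s1, s2⟩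
                · exfalso
                  have hfst := congrArg Prod.fst heq
                  simp only at hfst
                  rw [hyeq] at hfst
                  injection hfst with h1 _
                  injection h1 with _ h2
                  exact hdy h2
                · rw [hyeq] at s1
                  obtain ⟨hσj2, h3, h4⟩ := hstep_put_inv s1
                  obtain ⟨m1, m2⟩ := m
                  simp only at h3 h4
                  rw [h3, h4] at s2
                  -- s2 : HRun (ay' ++ (take,i)::byy, update σ jx true) ((put,i)::ry, δy)
                  have hsuf : (((LOp.put, i) : LSym 2) :: ry) <:+ (((LOp.take, i) : LSym 2) :: byy) :=
                    suffix_thru i ay' (hrun_suffix s2) hay' rfl rfl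
                  obtain ⟨τ, seg1, seg2⟩ := hrun_mid s2 (((LOp.take, i) : LSym 2) :: byy) hsuf ⟨ay', rfl⟩
                  have seg1' := hrun_consume i true ay' seg1 hay'
                  have hstq : Function.update (Function.update σ jx true) i true
                      = Function.update δx jx true := by
                    funext l
                    rcases fin2_cases hdx l with rfl | rfl
                    · rw [Function.update_self, Function.update_of_ne (Ne.symm hdx), hδx]
                    · rw [Function.update_of_ne hdx, Function.update_self, Function.update_self]
                  rcases Relation.ReflTransGen.cases_head seg2 with heq2 | ⟨m2, s3, s4⟩
                  · exfalso
                    have hfst := congrArg Prod.fst heq2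
                    simp only at hfst
                    injection hfst with h1 _
                    injection h1 with h2 _
                    exact LOp.noConfusion h2
                  · obtain ⟨m21, m22⟩ := m2
                    obtain ⟨h5, h6⟩ := hstep_take_inv s3
                    simp only at h5 h6
                    rw [h5, h6] at s4
                    have yrun : HRun (ay' ++ ((LOp.take, i) : LSym 2) :: byy, Function.update δx jx true)
                        (((LOp.put, i) : LSym 2) :: ry, δy) := by
                      rw [← hstq]
                      exact seg1'.trans (Relation.ReflTransGen.head
                        ⟨i, byy, Or.inr ⟨rfl, rfl, by simp [Function.update_idem]⟩⟩ s4)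
                    have stepy : HStep (y, δx)
                        (ay' ++ ((LOp.take, i) : LSym 2) :: byy, Function.update δx jx true) :=
                      ⟨jx, ay' ++ ((LOp.take, i) : LSym 2) :: byy, Or.inl ⟨by rw [hyeq], hjf, rfl, rfl⟩⟩
                    refine ⟨(((((LOp.put, i) : LSym 2) :: ry, true) : LSub 2) ::ₘ
                        ((((LOp.put, i) : LSym 2) :: rx, false) : LSub 2) ::ₘ 0, δy), ?_, dead_puts ?_, ?_⟩
                    · refine frun.trans ?_
                      have hsw : (((((LOp.put, i) : LSym 2) :: rx, false) : LSub 2) ::ₘ (y, true) ::ₘ 0 : LProc 2)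
                          = ((y, true) : LSub 2) ::ₘ ((((LOp.put, i) : LSym 2) :: rx, false) : LSub 2) ::ₘ 0 :=
                        Multiset.cons_swap _ _ _
                      rw [hsw]
                      exact Relation.ReflTransGen.head (hstep_lift stepy true _) (hrun_lift yrun true _)
                    · intro p hp
                      rcases Multiset.mem_cons.mp hp with rfl | hp
                      · exact ⟨i, ry, rfl, hδy⟩
                      · rcases Multiset.mem_cons.mp hp with rfl | hp
                        · exact ⟨i, rx, rfl, hδy⟩
                        · simp at hp
                    · intro hsucc
                      simp only [LSuccessful] at hsucc
                      rcases Multiset.mem_cons.mp hsucc with he | hsucc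
                      · injection he with h1 _
                        exact nomatch h1
                      · rcases Multiset.mem_cons.mp hsucc with he | hsucc
                        · injection he with h1 _
                          exact nomatch h1
                        · simp at hsucc

end NoPPAux
namespace NoPPAux

lemma cons_eq_singleton {α : Type*} {a x : α} {s : Multiset α} (h : a ::ₘ s = {x}) :
    a = x ∧ s = 0 := by
  have ha : a ∈ ({x} : Multiset α) := h ▸ Multiset.mem_cons_self a s
  rw [Multiset.mem_singleton] at ha
  subst ha
  refine ⟨rfl, ?_⟩
  rw [← Multiset.cons_zero a] at h
  exact (Multiset.cons_inj_right a).mp h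

lemma lockstep_singleton_inv {u : List (LSym 2)} {σ : Store 2} {t}
    (h : LockStep (({(u, false)} : LProc 2), σ) t) :
    ∃ w δ', HStep (u, σ) (w, δ') ∧ t = (({(w, false)} : LProc 2), δ') := by
  obtain ⟨l, w, b, R, hc⟩ := h
  rcases hc with ⟨h1, h2, h3, h4⟩ | ⟨h1, h3, h4⟩
  · simp only at h1 h2 h3 h4
    obtain ⟨he, hR⟩ := cons_eq_singleton h1.symm
    have hu : ((LOp.put, l) : LSym 2) :: w = u := congrArg Prod.fst he
    have hb : b = false := congrArg Prod.snd he
    subst hR; subst hb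
    refine ⟨w, Function.update σ l true, ⟨l, w, Or.inl ⟨hu.symm, h2, rfl, rfl⟩⟩, ?_⟩
    obtain ⟨t1, t2⟩ := t
    simp only at h3 h4
    rw [h3, h4, Multiset.cons_zero]
  · simp only at h1 h3 h4
    obtain ⟨he, hR⟩ := cons_eq_singleton h1.symm
    have hu : ((LOp.take, l) : LSym 2) :: w = u := congrArg Prod.fst he
    have hb : b = false := congrArg Prod.snd he
    subst hR; subst hb
    refine ⟨w, Function.update σ l false, ⟨l, w, Or.inr ⟨hu.symm, rfl, rfl⟩⟩, ?_⟩
    obtain ⟨t1, t2⟩ := t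
    simp only at h3 h4
    rw [h3, h4, Multiset.cons_zero]

lemma lockrun_singleton {v : List (LSym 2)} {δ : Store 2} :
    ∀ {s : LProc 2 × Store 2},
      Relation.ReflTransGen LockStep s (({(v, false)} : LProc 2), δ) →
      ∀ u σ, s = (({(u, false)} : LProc 2), σ) → HRun (u, σ) (v, δ) := by
  intro s h
  induction h using Relation.ReflTransGen.head_induction_on with
  | refl =>
    intro u σ hs
    have h1 : ({(v, false)} : LProc 2) = {(u, false)} := congrArg Prod.fst hs
    have h2 : δ = σ := congrArg Prod.snd hs
    rw [Multiset.singleton_inj] at h1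
    have h3 : v = u := congrArg Prod.fst h1
    subst h3; subst h2
    exact .refl
  | head hstep hrun ih =>
    intro u σ hs
    subst hs
    obtain ⟨w, δ', h1, h2⟩ := lockstep_singleton_inv hstep
    exact Relation.ReflTransGen.head h1 (ih w δ' h2)

lemma dead_rtg {t s : LProc 2 × Store 2} (hd : ∀ t', ¬ LockStep t t')
    (h : Relation.ReflTransGen LockStep t s) : s = t := by
  rcases Relation.ReflTransGen.cases_head h with heq | ⟨c, hc, -⟩
  · exact heq.symm
  · exact absurd hc (hd c)

/-- The SYNCSIMPLE process `!0 | ?✓`. -/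
def Pstar : SProc := ([SSym.bang], false) ::ₘ ([SSym.ques], true) ::ₘ 0

/-- The SYNCSIMPLE process `0 | ✓`. -/
def Qstar : SProc := (([] : List SSym), false) ::ₘ ([], true) ::ₘ 0

lemma sysstep_pstar {Q : SProc} (h : SysStep Pstar Q) : Q = Qstar := by
  obtain ⟨u1, u2, b1, b2, R, h1, h2⟩ := h
  have hm : ((SSym.bang :: u1, b1) : SSub) ∈ Pstar := by
    rw [h1]; exact Multiset.mem_cons_self _ _
  rcases Multiset.mem_cons.mp hm with he | hm2
  · have h3 : SSym.bang :: u1 = [SSym.bang] := congrArg Prod.fst he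
    have h4 : b1 = false := congrArg Prod.snd he
    injection h3 with _ h5
    subst h5; subst h4
    rw [Pstar] at h1
    have h6 : (([SSym.ques], true) : SSub) ::ₘ (0 : SProc) = (SSym.ques :: u2, b2) ::ₘ R :=
      (Multiset.cons_inj_right _).mp h1
    have hm3 : ((SSym.ques :: u2, b2) : SSub) ∈ (([SSym.ques], true) : SSub) ::ₘ (0 : SProc) := by
      rw [h6]; exact Multiset.mem_cons_self _ _
    rcases Multiset.mem_cons.mp hm3 with he2 | hm4
    · have h7 : SSym.ques :: u2 = [SSym.ques] := congrArg Prod.fst he2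
      have h8 : b2 = true := congrArg Prod.snd he2
      injection h7 with _ h9
      subst h9; subst h8
      have h10 : (0 : SProc) = R := (Multiset.cons_inj_right _).mp h6
      rw [h2, ← h10, Qstar]
    · simp at hm4
  · rcases Multiset.mem_cons.mp hm2 with he | hm3
    · have h3 : SSym.bang :: u1 = [SSym.ques] := congrArg Prod.fst he
      injection h3 with h4 _
      exact SSym.noConfusion h4
    · simp at hm3

lemma qstar_nostep {Q : SProc} : ¬ SysStep Qstar Q := by
  rintro ⟨u1, u2, b1, b2, R, h1, -⟩
  have hm : ((SSym.bang :: u1, b1) : SSub) ∈ Qstar := by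
    rw [h1]; exact Multiset.mem_cons_self _ _
  rcases Multiset.mem_cons.mp hm with he | hm2
  · have h3 : SSym.bang :: u1 = [] := congrArg Prod.fst he
    exact nomatch h3
  · rcases Multiset.mem_cons.mp hm2 with he | hm3
    · have h3 : SSym.bang :: u1 = [] := congrArg Prod.fst he
      exact nomatch h3
    · simp at hm3

lemma sysstep_pstar_exists : SysStep Pstar Qstar :=
  ⟨[], [], false, true, 0, rfl, rfl⟩

lemma smay_qstar : SMayConv Qstar :=
  ⟨Qstar, .refl, Multiset.mem_cons_of_mem (Multiset.mem_cons_self _ _)⟩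

lemma smay_pstar : SMayConv Pstar :=
  ⟨Qstar, Relation.ReflTransGen.single sysstep_pstar_exists,
    Multiset.mem_cons_of_mem (Multiset.mem_cons_self _ _)⟩

lemma smust_pstar : SMustConv Pstar := by
  intro Q h
  have : Q = Pstar ∨ Q = Qstar := by
    induction h with
    | refl => exact Or.inl rfl
    | tail h1 h2 ih =>
      rcases ih with rfl | rfl
      · exact Or.inr (sysstep_pstar h2)
      · exact absurd h2 qstar_nostep
  rcases this with rfl | rfl
  · exact smay_pstar
  · exact smay_qstar

end NoPPAux

/-- for two locks (any initial store), there is no correct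
compositional translation where both `τ(!)` and `τ(?)` have blocking type
`P_i P_i` on the same lock. -/
theorem no_blocking_type_PP_PP_same_lock :
    ∀ (IS : Store 2) (tb tq : List (LSym 2)) (i : Fin 2),
      Correct IS tb tq →
      BlockingTypePP IS tb i → BlockingTypePP IS tq i → False := by
  intro IS tb tq i hC hb hq
  obtain ⟨r1b, r2b, restb, -, -, Cb, runb, hCb⟩ := hb
  obtain ⟨r1q, r2q, restq, -, -, Cq, runq, hCq⟩ := hq
  have hDb : NoPPAux.DBlock i tb IS :=
    ⟨restb, Cb, NoPPAux.lockrun_singleton runb tb IS rfl, hCb⟩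
  have hDq : NoPPAux.DBlock i tq IS :=
    ⟨restq, Cq, NoPPAux.lockrun_singleton runq tq IS rfl, hCq⟩
  obtain ⟨t, rtg, hdead, hunsucc⟩ :=
    NoPPAux.main_reach i (tb.length + tq.length) tb tq IS le_rfl hDb hDq
  have hmust : SMustConv NoPPAux.Pstar := NoPPAux.smust_pstar
  have htrans : transProc tb tq NoPPAux.Pstar = ((tb, false) ::ₘ (tq, true) ::ₘ 0 : LProc 2) := by
    simp [transProc, transSub, NoPPAux.Pstar]
  have hL : LMustConv (((tb, false) ::ₘ (tq, true) ::ₘ 0 : LProc 2), IS) := by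
    have := ((hC NoPPAux.Pstar).2).mp hmust
    rwa [htrans] at this
  obtain ⟨t', rtg', hsucc⟩ := hL t rtg
  have ht : t' = t := NoPPAux.dead_rtg hdead rtg'
  exact hunsucc (ht ▸ hsucc)
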